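/- Let C be a salient closed convex cone in ℝⁿ, M a closed convex subset of ℝᵐ₊ \ {0}, and A₁, …, Aₘ closed convex subsets of C \ {0} each with recession cone C. Then the M-sum ⊕_M(A₁,…,Aₘ) = ⋃_{μ∈M} Σᵢ μᵢ ⋆ Aᵢ is closed. -/

import Mathlib

open Pointwise

/-- The recession cone `rec(S) = {d | S + d ⊆ S}`. -/
def recCone {E : Type*} [AddCommMonoid E] (S : Set E) : Set E :=
  {d | ∀ x ∈ S, x + d ∈ S}

/-- Epimultiplication: `α ⋆ S = αS` if `α ≠ 0`, and `0 ⋆ S = rec(S)`. -/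
noncomputable def epiSmul {E : Type*} [AddCommMonoid E] [SMul ℝ E] (a : ℝ) (S : Set E) :
    Set E :=
  if a = 0 then recCone S else a • S

open Filter Metric Bornology

/-- In a salient closed cone, the norm of a summand is controlled by the norm of a sum. -/
private lemma cone_norm_bound
    {E : Type*} [NormedAddCommGroup E] [NormedSpace ℝ E] [ProperSpace E]
    (C : Set E) (hCclosed : IsClosed C)
    (hCcone : ∀ t : ℝ, 0 < t → t • C ⊆ C)
    (hCsalient : ∀ x ∈ C, -x ∈ C → x = 0) :
    ∃ ε : ℝ, 0 < ε ∧ ∀ y ∈ C, ∀ z ∈ C, ε * ‖y‖ ≤ ‖y + z‖ := by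
  by_contra hcon
  push_neg at hcon
  have h' : ∀ k : ℕ, ∃ y ∈ C, ∃ z ∈ C, ‖y + z‖ < (1 / (k + 1 : ℝ)) * ‖y‖ := fun k =>
    hcon _ (by positivity)
  choose y hy z hz hlt using h'
  have hypos : ∀ k, 0 < ‖y k‖ := by
    intro k
    rcases (norm_nonneg (y k)).lt_or_eq with h | h
    · exact h
    · exfalso; have := hlt k; rw [← h] at this
      nlinarith [norm_nonneg (y k + z k)]
  set Y : ℕ → E := fun k => ‖y k‖⁻¹ • y k with hY
  set Z : ℕ → E := fun k => ‖y k‖⁻¹ • z k with hZ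
  have hYC : ∀ k, Y k ∈ C := fun k =>
    hCcone _ (inv_pos.2 (hypos k)) (Set.smul_mem_smul_set (hy k))
  have hZC : ∀ k, Z k ∈ C := fun k =>
    hCcone _ (inv_pos.2 (hypos k)) (Set.smul_mem_smul_set (hz k))
  have hYnorm : ∀ k, ‖Y k‖ = 1 := by
    intro k
    rw [hY, norm_smul, norm_inv, norm_norm, inv_mul_cancel₀ (hypos k).ne']
  have hsumlt : ∀ k, ‖Y k + Z k‖ < 1 / (k + 1 : ℝ) := by
    intro k
    have : Y k + Z k = ‖y k‖⁻¹ • (y k + z k) := by rw [smul_add]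
    rw [this, norm_smul, norm_inv, norm_norm]
    rw [inv_mul_lt_iff₀ (hypos k)]
    calc ‖y k + z k‖ < 1 / (k + 1 : ℝ) * ‖y k‖ := hlt k
      _ = ‖y k‖ * (1 / (k + 1 : ℝ)) := mul_comm _ _
  have hZnorm : ∀ k, ‖Z k‖ ≤ 2 := by
    intro k
    have h1 : ‖Y k + Z k - Y k‖ ≤ ‖Y k + Z k‖ + ‖Y k‖ := norm_sub_le _ _
    rw [add_sub_cancel_left] at h1
    have h2 : (1 : ℝ) / (k + 1) ≤ 1 := by
      rw [div_le_one (by positivity)]; linarith [Nat.cast_nonneg (α := ℝ) k]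
    have := hsumlt k
    rw [hYnorm k] at h1
    linarith
  have hball : ∀ k, (Y k, Z k) ∈ closedBall (0 : E × E) 2 := by
    intro k
    rw [mem_closedBall_zero_iff, Prod.norm_def]
    exact max_le (by rw [hYnorm k]; norm_num) (hZnorm k)
  obtain ⟨p, -, φ, hφ, htd⟩ :=
    tendsto_subseq_of_bounded (isBounded_closedBall (x := (0 : E × E)) (r := 2)) hball
  have hfst : Tendsto (fun k => Y (φ k)) atTop (nhds p.1) :=
    (continuous_fst.tendsto p).comp htd
  have hsnd : Tendsto (fun k => Z (φ k)) atTop (nhds p.2) :=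
    (continuous_snd.tendsto p).comp htd
  have hp1C : p.1 ∈ C := hCclosed.mem_of_tendsto hfst (Eventually.of_forall fun k => hYC _)
  have hp2C : p.2 ∈ C := hCclosed.mem_of_tendsto hsnd (Eventually.of_forall fun k => hZC _)
  have hp1norm : ‖p.1‖ = 1 := by
    have h1 : Tendsto (fun k => ‖Y (φ k)‖) atTop (nhds ‖p.1‖) := hfst.norm
    have h2 : Tendsto (fun k => ‖Y (φ k)‖) atTop (nhds 1) := by
      simp only [hYnorm]; exact tendsto_const_nhds
    exact tendsto_nhds_unique h1 h2
  have hsum0 : p.1 + p.2 = 0 := by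
    have h1 : Tendsto (fun k => Y (φ k) + Z (φ k)) atTop (nhds (p.1 + p.2)) := hfst.add hsnd
    have h2 : Tendsto (fun k => Y (φ k) + Z (φ k)) atTop (nhds 0) := by
      rw [tendsto_zero_iff_norm_tendsto_zero]
      apply squeeze_zero (fun k => norm_nonneg _) (fun k => (hsumlt (φ k)).le)
      have hk : ∀ k : ℕ, 1 / ((φ k : ℝ) + 1) ≤ 1 / ((k : ℝ) + 1) := by
        intro k
        apply one_div_le_one_div_of_le (by positivity)
        have h3 : (k : ℝ) ≤ (φ k : ℝ) := by exact_mod_cast hφ.le_apply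
        linarith
      apply squeeze_zero (fun k => by positivity) hk
      exact tendsto_one_div_add_atTop_nhds_zero_nat
    exact tendsto_nhds_unique h1 h2
  have : p.1 = 0 := hCsalient p.1 hp1C (by
    have h := neg_eq_of_add_eq_zero_left hsum0
    rw [← h, neg_neg]
    exact hp2C)
  rw [this, norm_zero] at hp1norm
  norm_num at hp1norm

/-- Let `C` be a salient closed convex cone in `ℝⁿ`, `M` a closed convex subset of
`ℝᵐ₊ \ {0}`, and `A₁, …, Aₘ` closed convex subsets of `C \ {0}` each with recession
cone `C`. Then the `M`-sum `⋃_{μ∈M} Σᵢ μᵢ ⋆ Aᵢ` is closed. -/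
theorem msum_isClosed
    (n : ℕ) (C : Set (EuclideanSpace ℝ (Fin n)))
    (hCclosed : IsClosed C) (hCconv : Convex ℝ C)
    (hCcone : ∀ t : ℝ, 0 < t → t • C ⊆ C)
    (hCsalient : ∀ x ∈ C, -x ∈ C → x = 0)
    (m : ℕ) (M : Set (Fin m → ℝ))
    (hMclosed : IsClosed M) (hMconv : Convex ℝ M)
    (hMsub : M ⊆ {μ : Fin m → ℝ | ∀ i, 0 ≤ μ i} \ {0})
    (A : Fin m → Set (EuclideanSpace ℝ (Fin n)))
    (hAclosed : ∀ i, IsClosed (A i)) (hAconv : ∀ i, Convex ℝ (A i))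
    (hAsub : ∀ i, A i ⊆ C \ {0})
    (hArec : ∀ i, recCone (A i) = C) :
    IsClosed (⋃ μ ∈ M, ∑ i, epiSmul (μ i) (A i)) := by
  classical
  rcases eq_or_ne m 0 with hm | hm
  · subst hm
    have hMe : M = ∅ := by
      ext μ
      simp only [Set.mem_empty_iff_false, iff_false]
      intro hμ
      exact (hMsub hμ).2 (by ext i; exact i.elim0)
    simp [hMe]
  by_cases hAne : ∀ i, (A i).Nonempty
  case neg =>
    rw [not_forall] at hAne
    obtain ⟨i, hi⟩ := hAne
    rw [Set.not_nonempty_iff_eq_empty] at hi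
    have hCuniv : C = Set.univ := by
      rw [← hArec i, hi]; ext x; simp [recCone]
    have hzero : ∀ x : EuclideanSpace ℝ (Fin n), x = 0 := fun x =>
      hCsalient x (by simp [hCuniv]) (by simp [hCuniv])
    exact Set.Subsingleton.isClosed (fun a _ b _ => by rw [hzero a, hzero b])
  have i₀ : Fin m := ⟨0, Nat.pos_of_ne_zero hm⟩
  have h0C : (0 : EuclideanSpace ℝ (Fin n)) ∈ C := by
    rw [← hArec i₀]; intro x hx; simpa using hx
  have hCadd : ∀ x ∈ C, ∀ y ∈ C, x + y ∈ C := by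
    intro x hx y hy
    have h2 : x + y = (2 : ℝ) • ((1 / 2 : ℝ) • x + (1 / 2 : ℝ) • y) := by
      rw [smul_add, smul_smul, smul_smul]; norm_num
    rw [h2]
    exact hCcone 2 (by norm_num)
      (Set.smul_mem_smul_set (hCconv hx hy (by norm_num) (by norm_num) (by norm_num)))
  have hESub : ∀ (i : Fin m) (t : ℝ), 0 ≤ t → epiSmul t (A i) ⊆ C := by
    intro i t ht
    rcases eq_or_lt_of_le ht with h0 | hpos
    · rw [epiSmul, if_pos h0.symm, hArec i]
    · rw [epiSmul, if_neg hpos.ne']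
      exact (Set.smul_set_mono fun a ha => (hAsub i ha).1).trans (hCcone t hpos)
  obtain ⟨ε, hε, hεb⟩ := cone_norm_bound C hCclosed hCcone hCsalient
  -- distance of A i to 0
  have hδ : ∀ i : Fin m, ∃ δ : ℝ, 0 < δ ∧ ∀ a ∈ A i, δ ≤ ‖a‖ := by
    intro i
    refine ⟨infDist 0 (A i), ?_, ?_⟩
    · exact ((hAclosed i).notMem_iff_infDist_pos (hAne i)).1 fun h => (hAsub i h).2 rfl
    · intro a ha
      have := infDist_le_dist_of_mem (x := (0 : EuclideanSpace ℝ (Fin n))) ha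
      rwa [dist_zero_left] at this
  choose δ hδpos hδle using hδ
  apply IsSeqClosed.isClosed
  intro x x₀ hx hx₀
  have hdata : ∀ k, ∃ μ ∈ M, ∃ y : Fin m → EuclideanSpace ℝ (Fin n),
      (∀ i, y i ∈ epiSmul (μ i) (A i)) ∧ ∑ i, y i = x k := by
    intro k
    obtain ⟨μ, hμ, hmem⟩ := Set.mem_iUnion₂.1 (hx k)
    obtain ⟨y, hy, hysum⟩ := (Set.mem_fintype_sum _ _).1 hmem
    exact ⟨μ, hμ, y, hy, hysum⟩
  choose μ hμM y hy hysum using hdata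
  have hyC : ∀ k i, y k i ∈ C := fun k i => hESub i _ ((hMsub (hμM k)).1 i) (hy k i)
  have hμnn : ∀ k i, 0 ≤ μ k i := fun k i => (hMsub (hμM k)).1 i
  -- bound on ‖x k‖
  obtain ⟨B, hB⟩ : ∃ B : ℝ, ∀ k, ‖x k‖ ≤ B := by
    obtain ⟨B, hB⟩ := hx₀.norm.bddAbove_range
    exact ⟨B, fun k => hB (Set.mem_range_self k)⟩
  -- bound on ‖y k i‖
  have hrest : ∀ k (i : Fin m), ∑ j ∈ Finset.univ.erase i, y k j ∈ C := by
    intro k i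
    classical
    induction (Finset.univ.erase i) using Finset.induction_on with
    | empty => simpa using h0C
    | insert _ _ hns ih =>
      rw [Finset.sum_insert hns]
      exact hCadd _ (hyC k _) _ ih
  have hyB : ∀ k i, ‖y k i‖ ≤ ε⁻¹ * B := by
    intro k i
    have h1 : ε * ‖y k i‖ ≤ ‖y k i + ∑ j ∈ Finset.univ.erase i, y k j‖ :=
      hεb _ (hyC k i) _ (hrest k i)
    have h2 : y k i + ∑ j ∈ Finset.univ.erase i, y k j = x k := by
      rw [← hysum k, Finset.add_sum_erase _ _ (Finset.mem_univ i)]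
    rw [h2] at h1
    have h3 : ‖y k i‖ ≤ ε⁻¹ * ‖x k‖ := by
      rw [inv_mul_eq_div, le_div_iff₀ hε, mul_comm]
      exact h1
    exact h3.trans (mul_le_mul_of_nonneg_left (hB k) (by positivity))
  have hB1nn : 0 ≤ ε⁻¹ * B := (norm_nonneg _).trans (hyB 0 i₀)
  -- bound on μ k i
  have hμB : ∀ k i, μ k i ≤ ε⁻¹ * B / δ i := by
    intro k i
    rcases eq_or_lt_of_le (hμnn k i) with h0 | hpos
    · rw [← h0]; exact div_nonneg hB1nn (hδpos i).le
    · have hmem := hy k i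
      rw [epiSmul, if_neg hpos.ne'] at hmem
      obtain ⟨a, ha, hay⟩ := hmem
      have h1 : μ k i * δ i ≤ ‖y k i‖ := by
        have : ‖y k i‖ = μ k i * ‖a‖ := by
          rw [← hay, norm_smul, Real.norm_eq_abs, abs_of_pos hpos]
        rw [this]
        exact mul_le_mul_of_nonneg_left (hδle i a ha) hpos.le
      rw [le_div_iff₀ (hδpos i)]
      exact h1.trans (hyB k i)
  -- bounded sequence in product space
  set R : ℝ := max (Finset.univ.sup' ⟨i₀, Finset.mem_univ i₀⟩ fun i => ε⁻¹ * B / δ i) (ε⁻¹ * B)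
    with hR
  have hball : ∀ k, ((μ k, y k) : (Fin m → ℝ) × (Fin m → EuclideanSpace ℝ (Fin n)))
      ∈ closedBall 0 R := by
    intro k
    rw [mem_closedBall_zero_iff, Prod.norm_def]
    have hRnn : 0 ≤ R := le_max_of_le_right hB1nn
    refine max_le ?_ ?_
    · rw [pi_norm_le_iff_of_nonneg hRnn]
      intro i
      rw [Real.norm_eq_abs, abs_of_nonneg (hμnn k i)]
      exact (hμB k i).trans (le_max_of_le_left
        (Finset.le_sup' (fun i => ε⁻¹ * B / δ i) (Finset.mem_univ i)))
    · rw [pi_norm_le_iff_of_nonneg hRnn]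
      intro i
      exact (hyB k i).trans (le_max_right _ _)
  obtain ⟨p, -, φ, hφ, htd⟩ :=
    tendsto_subseq_of_bounded (isBounded_closedBall
      (x := (0 : (Fin m → ℝ) × (Fin m → EuclideanSpace ℝ (Fin n)))) (r := R))
      hball
  have hμtd : Tendsto (fun k => μ (φ k)) atTop (nhds p.1) :=
    (continuous_fst.tendsto p).comp htd
  have hytd : Tendsto (fun k => y (φ k)) atTop (nhds p.2) :=
    (continuous_snd.tendsto p).comp htd
  have hμitd : ∀ i, Tendsto (fun k => μ (φ k) i) atTop (nhds (p.1 i)) :=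
    fun i => tendsto_pi_nhds.1 hμtd i
  have hyitd : ∀ i, Tendsto (fun k => y (φ k) i) atTop (nhds (p.2 i)) :=
    fun i => tendsto_pi_nhds.1 hytd i
  have hνM : p.1 ∈ M :=
    hMclosed.mem_of_tendsto hμtd (Eventually.of_forall fun k => hμM (φ k))
  have hxsum : ∑ i, p.2 i = x₀ := by
    have h1 : Tendsto (fun k => ∑ i, y (φ k) i) atTop (nhds (∑ i, p.2 i)) :=
      tendsto_finset_sum _ fun i _ => hyitd i
    have h2 : Tendsto (fun k => ∑ i, y (φ k) i) atTop (nhds x₀) := by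
      simp only [hysum]
      exact hx₀.comp hφ.tendsto_atTop
    exact tendsto_nhds_unique h1 h2
  refine Set.mem_iUnion₂.2 ⟨p.1, hνM, (Set.mem_fintype_sum _ _).2 ⟨p.2, fun i => ?_, hxsum⟩⟩
  rcases eq_or_lt_of_le ((hMsub hνM).1 i) with h0 | hpos
  · rw [epiSmul, if_pos h0.symm, hArec i]
    exact hCclosed.mem_of_tendsto (hyitd i) (Eventually.of_forall fun k => hyC (φ k) i)
  · rw [epiSmul, if_neg hpos.ne']
    have hev : ∀ᶠ k in atTop, 0 < μ (φ k) i :=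
      (hμitd i).eventually (eventually_gt_nhds hpos)
    have haev : ∀ᶠ k in atTop, (μ (φ k) i)⁻¹ • y (φ k) i ∈ A i := by
      filter_upwards [hev] with k hk
      have hmem := hy (φ k) i
      rw [epiSmul, if_neg hk.ne'] at hmem
      obtain ⟨a, ha, hay⟩ := hmem
      rw [← hay, inv_smul_smul₀ hk.ne']
      exact ha
    have htend : Tendsto (fun k => (μ (φ k) i)⁻¹ • y (φ k) i) atTop
        (nhds ((p.1 i)⁻¹ • p.2 i)) :=
      ((hμitd i).inv₀ hpos.ne').smul (hyitd i)
    have hmemA : (p.1 i)⁻¹ • p.2 i ∈ A i := (hAclosed i).mem_of_tendsto htend haev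
    exact ⟨_, hmemA, smul_inv_smul₀ hpos.ne' _⟩
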